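/- For every complex z with |z| < 1, the functions h_n and g_n are complex-differentiable at z with h_n′(z) = 1/√(1 − z^{2n}) and g_n′(z) = z^{n−2}/√(1 − z^{2n}), where √ denotes the principal complex square root (well defined since Re(1 − z^{2n}) > 0). In particular g_n′(z) = z^{n−2} · h_n′(z), i.e. the analytic dilatation of every rosette harmonic mapping f_β is ω(z) = z^{n−2}. -/

import Mathlib

open Real

noncomputable def A (m : ℕ) : ℝ := (Nat.centralBinom m : ℝ) / 4 ^ m

noncomputable def c (n m : ℕ) : ℝ := A m / (2 * m * n + 1)

noncomputable def d (n m : ℕ) : ℝ := A m * ((n : ℝ) - 1) / ((n : ℝ) * (2 * m + 1) - 1)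

noncomputable def H (n : ℕ) (z : ℂ) : ℂ := ∑' m : ℕ, (c n m : ℂ) * z ^ m

noncomputable def G (n : ℕ) (z : ℂ) : ℂ := ∑' m : ℕ, (d n m : ℂ) * z ^ m

noncomputable def hh (n : ℕ) (z : ℂ) : ℂ := ∑' m : ℕ, (c n m : ℂ) * z ^ (2 * m * n + 1)

noncomputable def gg (n : ℕ) (z : ℂ) : ℂ :=
  (1 / ((n : ℂ) - 1)) * ∑' m : ℕ, (d n m : ℂ) * z ^ (2 * m * n + n - 1)

noncomputable def f (n : ℕ) (β : ℝ) (z : ℂ) : ℂ :=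
  Complex.exp (Complex.I * β / 2) * hh n z +
    Complex.exp (-(Complex.I * β / 2)) * (starRingEnd ℂ) (gg n z)

noncomputable def K (n : ℕ) : ℝ :=
  Real.sqrt π * Real.Gamma (1 + 1 / (2 * n)) / Real.Gamma (1 / 2 + 1 / (2 * n))

lemma A_zero : A 0 = 1 := by simp [A, Nat.centralBinom_zero]

lemma A_nonneg (m : ℕ) : 0 ≤ A m := by unfold A; positivity

lemma A_le_one (m : ℕ) : A m ≤ 1 := by
  have h : Nat.centralBinom m ≤ 4 ^ m := by
    rw [Nat.centralBinom_eq_two_mul_choose]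
    calc (2 * m).choose m ≤ ∑ i ∈ Finset.range (2 * m + 1), (2 * m).choose i :=
          Finset.single_le_sum (fun i _ => Nat.zero_le _)
            (show m ∈ Finset.range (2 * m + 1) from Finset.mem_range.mpr (by omega))
      _ = 2 ^ (2 * m) := Nat.sum_range_choose _
      _ = 4 ^ m := by rw [pow_mul]; norm_num
  rw [A, div_le_one (by positivity)]
  exact_mod_cast h

lemma A_rec (m : ℕ) : ((m : ℝ) + 1) * A (m + 1) = ((m : ℝ) + 1 / 2) * A m := by
  have h' : ((m : ℝ) + 1) * (Nat.centralBinom (m + 1) : ℝ)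
      = 2 * (2 * m + 1) * (Nat.centralBinom m : ℝ) := by
    exact_mod_cast Nat.succ_mul_centralBinom_succ m
  unfold A
  rw [pow_succ, ← mul_div_assoc, ← mul_div_assoc,
    div_eq_div_iff (by positivity) (by positivity)]
  linear_combination (4 : ℝ) ^ m * h'

lemma A_rec' (m : ℕ) : ((m : ℂ) + 1) * (A (m + 1) : ℂ) = ((m : ℂ) + 1 / 2) * (A m : ℂ) := by
  have h := congrArg Complex.ofReal (A_rec m)
  push_cast at h
  exact_mod_cast h

section gen
variable (a : ℕ → ℝ) (e : ℕ → ℕ) (C : ℝ)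

lemma summable_aux {R : ℝ} (hR0 : 0 ≤ R) (hR1 : R < 1) :
    Summable (fun m : ℕ => ((m : ℝ) + 1) * R ^ m) := by
  have h1 : Summable (fun m : ℕ => (m : ℝ) ^ 1 * R ^ m) :=
    summable_pow_mul_geometric_of_norm_lt_one 1 (by rwa [Real.norm_eq_abs, abs_of_nonneg hR0])
  have h2 : Summable (fun m : ℕ => R ^ m) := summable_geometric_of_lt_one hR0 hR1
  exact (h1.add h2).congr (fun m => by ring)

lemma gen_summable (ha0 : ∀ m, 0 ≤ a m) (ha1 : ∀ m, a m ≤ 1) (he : ∀ m, m ≤ e m)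
    {z : ℂ} (hz : ‖z‖ < 1) :
    Summable (fun m : ℕ => (a m : ℂ) * z ^ (e m)) := by
  have hz0 : (0 : ℝ) ≤ ‖z‖ := norm_nonneg z
  refine Summable.of_norm_bounded (g := fun m => ‖z‖ ^ m)
    (summable_geometric_of_lt_one hz0 hz) (fun m => ?_)
  simp only [norm_mul, norm_pow, Complex.norm_real, Real.norm_eq_abs]
  rw [abs_of_nonneg (ha0 m)]
  calc a m * ‖z‖ ^ (e m) ≤ 1 * ‖z‖ ^ m := by
        apply mul_le_mul (ha1 m) (pow_le_pow_of_le_one hz0 hz.le (he m)) (by positivity) one_pos.le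
    _ = ‖z‖ ^ m := one_mul _

lemma gen_bound (ha0 : ∀ m, 0 ≤ a m) (hC : 0 ≤ C) (haC : ∀ m, a m * e m ≤ C * (m + 1))
    (he : ∀ m, m ≤ e m) {R : ℝ} (hRhalf : 1 / 2 ≤ R) (hR1 : R < 1)
    {y : ℂ} (hy : ‖y‖ ≤ R) (m : ℕ) :
    ‖(a m : ℂ) * (((e m : ℕ) : ℂ) * y ^ (e m - 1))‖ ≤ C * ((m : ℝ) + 1) * (2 * R ^ m) := by
  have hR0 : (0 : ℝ) ≤ R := le_trans (by norm_num) hRhalf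
  have hy0 : (0 : ℝ) ≤ ‖y‖ := norm_nonneg y
  simp only [norm_mul, norm_pow, Complex.norm_real, Real.norm_eq_abs, Complex.norm_natCast]
  rw [abs_of_nonneg (ha0 m)]
  have h1 : ‖y‖ ^ (e m - 1) ≤ R ^ (e m - 1) := pow_le_pow_left₀ hy0 hy _
  have h2 : R ^ (e m - 1) ≤ 2 * R ^ m := by
    rcases Nat.eq_zero_or_pos m with hm | hm
    · subst hm
      calc R ^ (e 0 - 1) ≤ 1 := pow_le_one₀ hR0 hR1.le
        _ ≤ 2 * R ^ 0 := by norm_num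
    · have hme : m - 1 ≤ e m - 1 := by have := he m; omega
      calc R ^ (e m - 1) ≤ R ^ (m - 1) := pow_le_pow_of_le_one hR0 hR1.le hme
        _ = R ^ m / R := by
            rw [eq_div_iff (by positivity), ← pow_succ]
            congr 1; omega
        _ ≤ 2 * R ^ m := by
            rw [div_le_iff₀ (by positivity)]
            calc R ^ m = R ^ m * 1 := (mul_one _).symm
              _ ≤ 2 * R ^ m * R := by nlinarith [pow_nonneg hR0 m]
    
  calc a m * ((e m : ℝ) * ‖y‖ ^ (e m - 1))
      ≤ (C * ((m : ℝ) + 1)) * ‖y‖ ^ (e m - 1) := by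
        rw [← mul_assoc]
        exact mul_le_mul_of_nonneg_right (haC m) (by positivity)
    _ ≤ (C * ((m : ℝ) + 1)) * (2 * R ^ m) := by
        refine mul_le_mul_of_nonneg_left (le_trans h1 h2) (by positivity)
    _ = C * ((m : ℝ) + 1) * (2 * R ^ m) := by ring

lemma gen_hasDerivAt (ha0 : ∀ m, 0 ≤ a m) (ha1 : ∀ m, a m ≤ 1) (hC : 0 ≤ C)
    (haC : ∀ m, a m * e m ≤ C * (m + 1)) (he : ∀ m, m ≤ e m)
    {z : ℂ} (hz : ‖z‖ < 1) :
    HasDerivAt (fun y : ℂ => ∑' m, (a m : ℂ) * y ^ (e m))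
      (∑' m, (a m : ℂ) * (((e m : ℕ) : ℂ) * z ^ (e m - 1))) z := by
  set R : ℝ := (‖z‖ + 1) / 2 with hR
  have hz0 : (0 : ℝ) ≤ ‖z‖ := norm_nonneg z
  have hRhalf : 1 / 2 ≤ R := by rw [hR]; linarith
  have hR1 : R < 1 := by rw [hR]; linarith
  have hzR : ‖z‖ < R := by rw [hR]; linarith
  have hR0 : (0 : ℝ) ≤ R := le_trans (by norm_num) hRhalf
  have husum : Summable (fun m : ℕ => C * ((m : ℝ) + 1) * (2 * R ^ m)) := by
    have := (summable_aux hR0 hR1).mul_left (C * 2)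
    exact this.congr (fun m => by ring)
  refine hasDerivAt_tsum_of_isPreconnected (𝕜 := ℂ) (F := ℂ)
    (g' := fun m y => (a m : ℂ) * (((e m : ℕ) : ℂ) * y ^ (e m - 1))) (y₀ := 0) husum Metric.isOpen_ball
    (convex_ball (0 : ℂ) R).isPreconnected
    (fun m y _ => ?_) (fun m y hy => ?_) ?_ ?_ ?_
  · exact ((hasDerivAt_pow (e m) y).const_mul ((a m : ℂ)))
  · have hy' : ‖y‖ ≤ R := by
      have := Metric.mem_ball.mp hy
      rw [dist_zero_right] at this
      exact this.le
    exact gen_bound a e C ha0 hC haC he hRhalf hR1 hy' m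
  · exact Metric.mem_ball_self (by linarith)
  · -- summable at 0
    apply summable_of_ne_finset_zero (s := {0})
    intro m hm
    have hm0 : m ≠ 0 := by simpa using hm
    have : 0 < e m := lt_of_lt_of_le (Nat.pos_of_ne_zero hm0) (he m)
    simp [zero_pow (Nat.pos_iff_ne_zero.mp this)]
  · exact Metric.mem_ball.mpr (by rw [dist_zero_right]; exact hzR)

lemma gen_summable' (ha0 : ∀ m, 0 ≤ a m) (hC : 0 ≤ C)
    (haC : ∀ m, a m * e m ≤ C * (m + 1)) (he : ∀ m, m ≤ e m)
    {z : ℂ} (hz : ‖z‖ < 1) :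
    Summable (fun m : ℕ => (a m : ℂ) * (((e m : ℕ) : ℂ) * z ^ (e m - 1))) := by
  set R : ℝ := (‖z‖ + 1) / 2 with hR
  have hz0 : (0 : ℝ) ≤ ‖z‖ := norm_nonneg z
  have hRhalf : 1 / 2 ≤ R := by rw [hR]; linarith
  have hR1 : R < 1 := by rw [hR]; linarith
  have hzR : ‖z‖ ≤ R := by rw [hR]; linarith
  have hR0 : (0 : ℝ) ≤ R := le_trans (by norm_num) hRhalf
  have husum : Summable (fun m : ℕ => C * ((m : ℝ) + 1) * (2 * R ^ m)) := by
    have := (summable_aux hR0 hR1).mul_left (C * 2)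
    exact this.congr (fun m => by ring)
  exact Summable.of_norm_bounded husum
    (fun m => gen_bound a e C ha0 hC haC he hRhalf hR1 hzR m)

end gen
noncomputable def SS (w : ℂ) : ℂ := ∑' m : ℕ, (A m : ℂ) * w ^ m

noncomputable def SSd (w : ℂ) : ℂ := ∑' m : ℕ, (A m : ℂ) * (((m : ℕ) : ℂ) * w ^ (m - 1))

lemma A_haC (m : ℕ) : A m * (m : ℝ) ≤ 1 * ((m : ℝ) + 1) := by
  have h1 := A_le_one m
  have h0 := A_nonneg m
  have hm : (0 : ℝ) ≤ (m : ℝ) := Nat.cast_nonneg m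
  nlinarith

lemma hasSum_SS {w : ℂ} (hw : ‖w‖ < 1) :
    HasSum (fun m : ℕ => (A m : ℂ) * w ^ m) (SS w) :=
  (gen_summable A id A_nonneg A_le_one (fun m => le_rfl) hw).hasSum

lemma hasDerivAt_SS {w : ℂ} (hw : ‖w‖ < 1) : HasDerivAt SS (SSd w) w := by
  have := gen_hasDerivAt A id 1 A_nonneg A_le_one one_pos.le A_haC (fun m => le_rfl) hw
  exact this

lemma hasSum_SSd {w : ℂ} (hw : ‖w‖ < 1) :
    HasSum (fun m : ℕ => (A m : ℂ) * (((m : ℕ) : ℂ) * w ^ (m - 1))) (SSd w) :=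
  (gen_summable' A id 1 A_nonneg one_pos.le A_haC (fun m => le_rfl) hw).hasSum

lemma hasSum_SSd' {w : ℂ} (hw : ‖w‖ < 1) :
    HasSum (fun m : ℕ => ((A (m + 1) : ℂ) * ((m : ℂ) + 1)) * w ^ m) (SSd w) := by
  have h := hasSum_SSd hw
  have h2 := (hasSum_nat_add_iff' (f := fun m : ℕ => (A m : ℂ) * (((m : ℕ) : ℂ) * w ^ (m - 1))) 1).mpr h
  simp only [Finset.range_one, Finset.sum_singleton, Nat.cast_zero, zero_mul, mul_zero,
    sub_zero] at h2
  refine h2.congr_fun (fun m => ?_)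
  push_cast
  ring_nf

lemma SS_ode {w : ℂ} (hw : ‖w‖ < 1) : (1 - w) * SSd w = (1 / 2) * SS w := by
  have h1 := hasSum_SSd' hw
  have h2 : HasSum (fun m : ℕ => ((A m : ℂ) * (m : ℂ)) * w ^ m) (w * SSd w) := by
    have h3 := h1.mul_left w
    have h4 : HasSum (fun m : ℕ => ((A (m + 1) : ℂ) * ((m : ℕ) + 1 : ℂ)) * w ^ (m + 1))
        (w * SSd w) := h3.congr_fun (fun m => by ring)
    have h5 := (hasSum_nat_add_iff (f := fun m : ℕ => ((A m : ℂ) * (m : ℂ)) * w ^ m) 1).mp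
      (h4.congr_fun (fun m => by push_cast; ring))
    simpa using h5
  have h3 := h1.sub h2
  have h4 : HasSum (fun m : ℕ => (1 / 2 : ℂ) * ((A m : ℂ) * w ^ m)) (SSd w - w * SSd w) := by
    refine h3.congr_fun (fun m => ?_)
    have := A_rec' m
    linear_combination (-(w ^ m)) * this
  have h5 := (hasSum_SS hw).mul_left (1 / 2 : ℂ)
  have := h4.unique h5
  linear_combination this

lemma one_sub_re_pos {w : ℂ} (hw : ‖w‖ < 1) : 0 < (1 - w).re := by
  have := Complex.re_le_norm w
  simp only [Complex.sub_re, Complex.one_re]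
  linarith

lemma one_sub_ne_zero {w : ℂ} (hw : ‖w‖ < 1) : (1 : ℂ) - w ≠ 0 := by
  intro h
  have := one_sub_re_pos hw
  rw [h] at this
  simp at this

lemma hasDerivAt_qq {w : ℂ} (hw : ‖w‖ < 1) :
    HasDerivAt (fun w => SS w * (1 - w) ^ ((1 : ℂ) / 2)) 0 w := by
  have hslit : (1 - w) ∈ Complex.slitPlane := Or.inl (one_sub_re_pos hw)
  have hp : HasDerivAt (fun w : ℂ => (1 - w) ^ ((1 : ℂ) / 2))
      (((1 : ℂ) / 2) * (1 - w) ^ ((1 : ℂ) / 2 - 1) * (-1)) w :=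
    HasDerivAt.cpow_const ((hasDerivAt_id w).const_sub 1) hslit
  have h := (hasDerivAt_SS hw).mul hp
  refine h.congr_deriv (Eq.symm ?_)
  have hx0 : (1 : ℂ) - w ≠ 0 := one_sub_ne_zero hw
  have e1 : ((1 : ℂ) / 2 - 1) = -((1 : ℂ) / 2) := by norm_num
  have e2 : (1 - w) ^ ((1 : ℂ) / 2) = (1 - w) * (1 - w) ^ (-((1 : ℂ) / 2)) := by
    have e3 : ((1 : ℂ) / 2) = 1 + (-((1 : ℂ) / 2)) := by norm_num
    nth_rewrite 1 [e3]
    rw [Complex.cpow_add _ _ hx0, Complex.cpow_one]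
  rw [e1, e2]
  have hode := SS_ode hw
  linear_combination (-(1 - w) ^ (-((1 : ℂ) / 2))) * hode

lemma qq_const {w : ℂ} (hw : ‖w‖ < 1) :
    SS w * (1 - w) ^ ((1 : ℂ) / 2) = 1 := by
  set qq : ℂ → ℂ := fun w => SS w * (1 - w) ^ ((1 : ℂ) / 2) with hqq
  have hmem : ∀ y ∈ Metric.ball (0 : ℂ) 1, ‖y‖ < 1 := by
    intro y hy
    rw [Metric.mem_ball, dist_zero_right] at hy
    exact hy
  have hdiff : DifferentiableOn ℂ qq (Metric.ball 0 1) := fun y hy =>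
    ((hasDerivAt_qq (hmem y hy)).differentiableAt).differentiableWithinAt
  have hfder : ∀ y ∈ Metric.ball (0 : ℂ) 1, fderivWithin ℂ qq (Metric.ball 0 1) y = 0 := by
    intro y hy
    rw [fderivWithin_of_isOpen Metric.isOpen_ball hy]
    rw [(hasDerivAt_qq (hmem y hy)).hasFDerivAt.fderiv]
    ext1
    simp
  have h0 : (0 : ℂ) ∈ Metric.ball (0 : ℂ) 1 := Metric.mem_ball_self one_pos
  have hwmem : w ∈ Metric.ball (0 : ℂ) 1 := by
    rw [Metric.mem_ball, dist_zero_right]; exact hw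
  have hconst := (convex_ball (0 : ℂ) 1).is_const_of_fderivWithin_eq_zero hdiff hfder hwmem h0
  have hq0 : qq 0 = 1 := by
    have hSS0 : SS 0 = 1 := by
      rw [SS, tsum_eq_single 0 (fun m hm => by simp [zero_pow hm])]
      simp [A_zero]
    simp [hqq, hSS0]
  exact hconst.trans hq0

lemma SS_eq {w : ℂ} (hw : ‖w‖ < 1) : SS w = (1 - w) ^ (-(1 / 2) : ℂ) := by
  have h1 := qq_const hw
  rw [Complex.cpow_neg]
  exact eq_inv_of_mul_eq_one_left (by linear_combination h1)

lemma key_tsum {w : ℂ} (hw : ‖w‖ < 1) :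
    ∑' m : ℕ, (A m : ℂ) * w ^ m = (1 - w) ^ (-(1 / 2) : ℂ) := SS_eq hw




section main
variable {n : ℕ} (hn : 3 ≤ n)

lemma hn3 (hn : 3 ≤ n) : (3 : ℝ) ≤ (n : ℝ) := by exact_mod_cast hn

lemma c_den_pos (m : ℕ) : (0 : ℝ) < 2 * (m : ℝ) * (n : ℝ) + 1 := by positivity

lemma c_mul (m : ℕ) : c n m * ((2 * m * n + 1 : ℕ) : ℝ) = A m := by
  rw [c]
  push_cast
  exact div_mul_cancel₀ _ (c_den_pos m).ne'

lemma c_nonneg (m : ℕ) : 0 ≤ c n m := div_nonneg (A_nonneg m) (c_den_pos m).le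

lemma c_le_one (m : ℕ) : c n m ≤ 1 := by
  rw [c, div_le_one (c_den_pos m)]
  have h1 := A_le_one m
  have h2 : (0 : ℝ) ≤ 2 * (m : ℝ) * (n : ℝ) := by positivity
  linarith

lemma c_haC (m : ℕ) : c n m * ((2 * m * n + 1 : ℕ) : ℝ) ≤ 1 * ((m : ℝ) + 1) := by
  rw [c_mul]
  have := A_le_one m
  have : (0 : ℝ) ≤ (m : ℝ) := Nat.cast_nonneg m
  have := A_le_one m
  linarith

lemma c_he (hn : 3 ≤ n) (m : ℕ) : m ≤ 2 * m * n + 1 := by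
  have h1 : m * 1 ≤ (2 * m) * n := Nat.mul_le_mul (by omega) (by omega)
  omega

lemma d_den_pos (hn : 3 ≤ n) (m : ℕ) : (0 : ℝ) < (n : ℝ) * (2 * m + 1) - 1 := by
  have h := hn3 hn
  have hm : (0 : ℝ) ≤ (m : ℝ) := Nat.cast_nonneg m
  nlinarith

lemma d_nonneg (hn : 3 ≤ n) (m : ℕ) : 0 ≤ d n m := by
  have h := hn3 hn
  exact div_nonneg (mul_nonneg (A_nonneg m) (by linarith)) (d_den_pos hn m).le

lemma d_le_one (hn : 3 ≤ n) (m : ℕ) : d n m ≤ 1 := by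
  rw [d, div_le_one (d_den_pos hn m)]
  have h := hn3 hn
  have hm : (0 : ℝ) ≤ (m : ℝ) := Nat.cast_nonneg m
  nlinarith [A_le_one m, A_nonneg m]

lemma d_cast (hn : 3 ≤ n) (m : ℕ) :
    ((2 * m * n + n - 1 : ℕ) : ℝ) = (n : ℝ) * (2 * (m : ℝ) + 1) - 1 := by
  have h1 : 1 ≤ n := by omega
  have h2 : 1 ≤ 2 * m * n + n := le_trans h1 (Nat.le_add_left _ _)
  rw [Nat.cast_sub h2]
  push_cast
  ring

lemma d_mul (hn : 3 ≤ n) (m : ℕ) :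
    d n m * ((2 * m * n + n - 1 : ℕ) : ℝ) = A m * ((n : ℝ) - 1) := by
  rw [d_cast hn, d]
  exact div_mul_cancel₀ _ (d_den_pos hn m).ne'

lemma d_haC (hn : 3 ≤ n) (m : ℕ) :
    d n m * ((2 * m * n + n - 1 : ℕ) : ℝ) ≤ (n : ℝ) * ((m : ℝ) + 1) := by
  rw [d_mul hn]
  have h := hn3 hn
  have hm : (0 : ℝ) ≤ (m : ℝ) := Nat.cast_nonneg m
  nlinarith [A_le_one m, A_nonneg m]

lemma d_he (hn : 3 ≤ n) (m : ℕ) : m ≤ 2 * m * n + n - 1 := by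
  have h1 : m * 1 ≤ (2 * m) * n := Nat.mul_le_mul (by omega) (by omega)
  omega

end main


theorem stmt_6 (n : ℕ) (hn : 3 ≤ n) (z : ℂ) (hz : ‖z‖ < 1) :
    0 < (1 - z ^ (2 * n)).re ∧
    HasDerivAt (hh n) ((1 - z ^ (2 * n)) ^ (-(1 / 2) : ℂ)) z ∧
    HasDerivAt (gg n) (z ^ (n - 2) * (1 - z ^ (2 * n)) ^ (-(1 / 2) : ℂ)) z ∧
    deriv (gg n) z = z ^ (n - 2) * deriv (hh n) z := by
  have hw : ‖z ^ (2 * n)‖ < 1 := by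
    rw [norm_pow]
    exact pow_lt_one₀ (norm_nonneg z) hz (by omega)
  have hpart1 : 0 < (1 - z ^ (2 * n)).re := by
    have h := Complex.re_le_norm (z ^ (2 * n))
    simp only [Complex.sub_re, Complex.one_re]
    linarith
  -- part 2
  have hpart2 : HasDerivAt (hh n) ((1 - z ^ (2 * n)) ^ (-(1 / 2) : ℂ)) z := by
    have hd := gen_hasDerivAt (c n) (fun m => 2 * m * n + 1) 1 c_nonneg c_le_one
      one_pos.le c_haC (c_he hn) hz
    have heq : (∑' m : ℕ, (c n m : ℂ) * (((2 * m * n + 1 : ℕ) : ℂ) * z ^ (2 * m * n + 1 - 1)))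
        = (1 - z ^ (2 * n)) ^ (-(1 / 2) : ℂ) := by
      rw [← key_tsum hw]
      refine tsum_congr (fun m => ?_)
      have hc : (c n m : ℂ) * ((2 * m * n + 1 : ℕ) : ℂ) = (A m : ℂ) := by
        have := congrArg Complex.ofReal (c_mul (n := n) m)
        push_cast at this ⊢
        linear_combination this
      have hzp : z ^ (2 * m * n + 1 - 1) = (z ^ (2 * n)) ^ m := by
        rw [← pow_mul]
        congr 1
        have : 2 * m * n + 1 - 1 = 2 * m * n := by omega
        rw [this]; ring
      rw [hzp, ← mul_assoc, hc]
    rw [← heq]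
    unfold hh
    exact hd
  -- part 3
  have hn1 : ((n : ℂ) - 1) ≠ 0 := by
    have : (n : ℂ) ≠ 1 := by
      intro h
      have : n = 1 := by exact_mod_cast h
      omega
    exact sub_ne_zero.mpr this
  have hpart3 : HasDerivAt (gg n) (z ^ (n - 2) * (1 - z ^ (2 * n)) ^ (-(1 / 2) : ℂ)) z := by
    have hd := gen_hasDerivAt (d n) (fun m => 2 * m * n + n - 1) (n : ℝ) (d_nonneg hn)
      (d_le_one hn) (Nat.cast_nonneg n) (d_haC hn) (d_he hn) hz
    have hd2 := hd.const_mul (1 / ((n : ℂ) - 1))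
    have heq : (1 / ((n : ℂ) - 1)) *
        (∑' m : ℕ, (d n m : ℂ) * (((2 * m * n + n - 1 : ℕ) : ℂ) * z ^ (2 * m * n + n - 1 - 1)))
        = z ^ (n - 2) * (1 - z ^ (2 * n)) ^ (-(1 / 2) : ℂ) := by
      have hterm : ∀ m : ℕ, (d n m : ℂ) * (((2 * m * n + n - 1 : ℕ) : ℂ) * z ^ (2 * m * n + n - 1 - 1))
          = (((n : ℂ) - 1) * z ^ (n - 2)) * ((A m : ℂ) * (z ^ (2 * n)) ^ m) := by
        intro m
        have hc : (d n m : ℂ) * ((2 * m * n + n - 1 : ℕ) : ℂ) = (A m : ℂ) * ((n : ℂ) - 1) := by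
          have := congrArg Complex.ofReal (d_mul hn m)
          push_cast at this ⊢
          linear_combination this
        have hzp : z ^ (2 * m * n + n - 1 - 1) = (z ^ (2 * n)) ^ m * z ^ (n - 2) := by
          rw [← pow_mul, ← pow_add]
          congr 1
          have h1 : 2 * n * m = 2 * m * n := by ring
          have h2 : m * 1 ≤ (2 * m) * n := Nat.mul_le_mul (by omega) (by omega)
          omega
        rw [hzp, ← mul_assoc, hc]
        ring
      rw [tsum_congr hterm, tsum_mul_left, key_tsum hw]
      field_simp
    rw [← heq]
    unfold gg
    exact hd2
  exact ⟨hpart1, hpart2, hpart3, by rw [hpart2.deriv, hpart3.deriv]⟩
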